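/- Let C be a category with finite products, x, m, y objects of C, and α : x ⟶ m ⨯ y, β : m ⨯ y ⟶ x morphisms with α ≫ β = 𝟙 x and β ≫ α = 𝟙 (m ⨯ y). Define get := α ≫ prod.snd : x ⟶ y and put := prod.lift (prod.fst ≫ α ≫ prod.fst) prod.snd ≫ β : x ⨯ y ⟶ x. Then the lens (get, put) is lawful, i.e. it satisfies: (GetPut) prod.lift (𝟙 x) get ≫ put = 𝟙 x; (PutGet) put ≫ get = prod.snd; (PutPut) prod.map put (𝟙 y) ≫ put = prod.map prod.fst (𝟙 y) ≫ put as morphisms (x ⨯ y) ⨯ y ⟶ x. -/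

import Mathlib

open CategoryTheory CategoryTheory.Limits

/-- If `α : x ⟶ m ⨯ y` and `β : m ⨯ y ⟶ x` are mutually inverse, then the lens with
`get := α ≫ prod.snd` and `put := prod.lift (prod.fst ≫ α ≫ prod.fst) prod.snd ≫ β`
is lawful: it satisfies GetPut, PutGet and PutPut. -/
theorem iso_lens_lawful {C : Type*} [Category C] [HasFiniteProducts C]
    (x m y : C) (α : x ⟶ m ⨯ y) (β : m ⨯ y ⟶ x)
    (h1 : α ≫ β = 𝟙 x) (h2 : β ≫ α = 𝟙 (m ⨯ y)) :
    -- GetPut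
    (prod.lift (𝟙 x) (α ≫ prod.snd) ≫
        (prod.lift (prod.fst ≫ α ≫ prod.fst) prod.snd ≫ β) = 𝟙 x) ∧
    -- PutGet
    ((prod.lift (prod.fst ≫ α ≫ prod.fst) prod.snd ≫ β) ≫ (α ≫ prod.snd) =
        prod.snd) ∧
    -- PutPut
    (prod.map (prod.lift (prod.fst ≫ α ≫ prod.fst) prod.snd ≫ β) (𝟙 y) ≫
        (prod.lift (prod.fst ≫ α ≫ prod.fst) prod.snd ≫ β) =
      prod.map prod.fst (𝟙 y) ≫
        (prod.lift (prod.fst ≫ α ≫ prod.fst) prod.snd ≫ β)) := by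
  have key : ∀ {z : C} (f : z ⟶ x ⨯ y),
      f ≫ (prod.lift (prod.fst ≫ α ≫ prod.fst) prod.snd ≫ β) ≫ α =
      f ≫ prod.lift (prod.fst ≫ α ≫ prod.fst) prod.snd := by
    intro z f
    rw [Category.assoc, h2, Category.comp_id]
  refine ⟨?_, ?_, ?_⟩
  · have : prod.lift (𝟙 x) (α ≫ prod.snd) ≫ prod.lift (prod.fst ≫ α ≫ prod.fst) prod.snd
        = α := by
      apply Limits.prod.hom_ext <;> simp [prod.lift_fst, prod.lift_snd, prod.lift_fst_assoc, prod.lift_snd_assoc]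
    rw [← Category.assoc, this, h1]
  · rw [Category.assoc, ← Category.assoc β, h2, Category.id_comp]
    simp [prod.lift_fst, prod.lift_snd, prod.lift_fst_assoc, prod.lift_snd_assoc]
  · haveI : IsIso α := ⟨β, h1, h2⟩
    apply (cancel_mono α).mp
    simp only [Category.assoc, h2, Category.comp_id]
    apply Limits.prod.hom_ext
    · simp only [Category.assoc, prod.lift_fst, prod.map_fst_assoc]
      rw [reassoc_of% key]
      simp [prod.lift_fst, prod.lift_snd, prod.lift_fst_assoc, prod.lift_snd_assoc]
    · simp [prod.lift_fst, prod.lift_snd, prod.lift_fst_assoc, prod.lift_snd_assoc]
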